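/- Let 𝒢 be an ultragraph without sinks. If 𝒢 satisfies Condition (K), then the ultragraph groupoid 𝔊_𝒢 is strongly effective: for every nonempty closed invariant subset U of the unit space 𝔊_𝒢⁽⁰⁾, the restriction 𝔊_𝒢|_U = {g ∈ 𝔊_𝒢 : s(g), r(g) ∈ U} is effective, i.e., the interior of Iso(𝔊_𝒢|_U) ∖ (𝔊_𝒢|_U)⁽⁰⁾ is empty, where Iso denotes the set of elements whose source equals their range. -/

import Mathlib

set_option synthInstance.maxHeartbeats 1000000
set_option maxHeartbeats 1000000

noncomputable section
open Classical TensorProduct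

/-- An ultragraph: countable sets of vertices and edges (countability is imposed in the
theorems), a source map and a range map taking nonempty sets of vertices. -/
structure Ultragraph (V E : Type) where
  s : E → V
  r : E → Set V
  r_nonempty : ∀ e, (r e).Nonempty

namespace Ultragraph

variable {V E : Type}

/-- Membership in `𝒢⁰`: the smallest collection of subsets of `G⁰` containing the
singletons and the ranges of edges, closed under finite unions and intersections. -/
inductive IsG0 (U : Ultragraph V E) : Set V → Prop
  | vertex (v : V) : IsG0 U {v}
  | range (e : E) : IsG0 U (U.r e)
  | union {A B : Set V} : IsG0 U A → IsG0 U B → IsG0 U (A ∪ B)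
  | inter {A B : Set V} : IsG0 U A → IsG0 U B → IsG0 U (A ∩ B)

variable (U : Ultragraph V E)

/-- No sinks: every vertex emits at least one edge. -/
def HasNoSinks : Prop := ∀ v : V, ∃ e : E, U.s e = v

/-- No vertex is an infinite emitter. -/
def NoInfiniteEmitters : Prop := ∀ v : V, {e : E | U.s e = v}.Finite

/-- A regular vertex: `0 < |s⁻¹(v)| < ∞`. -/
def IsRegular (v : V) : Prop := {e : E | U.s e = v}.Nonempty ∧ {e : E | U.s e = v}.Finite

/-- Two edges are composable when the source of the second lies in the range of the first. -/
def Adj (e f : E) : Prop := U.s f ∈ U.r e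

/-- A (possibly empty) compatible list of edges. -/
def IsEdgePath (l : List E) : Prop := List.Chain' U.Adj l

/-- Range of a list of edges: the range of its last edge (junk value `∅` on `[]`). -/
def rList (l : List E) : Set V :=
  match l.getLast? with
  | some e => U.r e
  | none => ∅

/-- A finite path in `𝒢*`: either an element of `𝒢⁰` (length `0`) or a nonempty
compatible list of edges. -/
def IsFPath : Set V ⊕ List E → Prop
  | Sum.inl A => U.IsG0 A
  | Sum.inr l => l ≠ [] ∧ U.IsEdgePath l

/-- Range of a finite path. -/
def rF : Set V ⊕ List E → Set V
  | Sum.inl A => A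
  | Sum.inr l => U.rList l

/-- "The source of the finite path `α` is the vertex `v`". -/
def sFMatch : Set V ⊕ List E → V → Prop
  | Sum.inl A, v => A = ({v} : Set V)
  | Sum.inr l, v => ∃ e, l.head? = some e ∧ U.s e = v

/-- A cycle: a nonempty path whose source vertex belongs to its range. -/
def IsCycle (c : List E) : Prop :=
  c ≠ [] ∧ U.IsEdgePath c ∧ ∃ e, c.head? = some e ∧ U.s e ∈ U.rList c

/-- A first-return path based at `v`. -/
def IsFirstReturn (v : V) (c : List E) : Prop :=
  c ≠ [] ∧ U.IsEdgePath c ∧ (∃ e, c.head? = some e ∧ U.s e = v) ∧ v ∈ U.rList c ∧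
    ∀ (i : ℕ) (h : i < c.length), 0 < i → U.s (c.get ⟨i, h⟩) ≠ v

/-- Condition (K). -/
def ConditionK : Prop :=
  ∀ v : V, (∀ c : List E, ¬ U.IsFirstReturn v c) ∨
    ∃ c₁ c₂ : List E, U.IsFirstReturn v c₁ ∧ U.IsFirstReturn v c₂ ∧ c₁ ≠ c₂

/-- `w ≥ v`: there is a finite path with source `w` whose range contains `v`. -/
def VGe (w v : V) : Prop := ∃ α : Set V ⊕ List E, U.IsFPath α ∧ U.sFMatch α w ∧ v ∈ U.rF α

/-- An ultrapath, given as raw data `(α, A)` (a list of edges and a range set):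
the list is compatible, `A ∈ 𝒢⁰` and `A ⊆ r(α)` when `α` is nonempty.
Length-zero ultrapaths `( [], A )` are the elements `A ∈ 𝒢⁰`. -/
def IsUPath (x : List E × Set V) : Prop :=
  U.IsEdgePath x.1 ∧ U.IsG0 x.2 ∧ ∀ e, x.1.getLast? = some e → x.2 ⊆ U.r e

/-- The "source" of an ultrapath, as a set: the singleton on the source of its first edge,
or the set itself in length zero. -/
def srcSet (x : List E × Set V) : Set V :=
  match x.1.head? with
  | some e => {U.s e}
  | none => x.2

/-- The concatenation `x · y` is defined. -/
def CanConcatU (x y : List E × Set V) : Prop := (x.2 ∩ U.srcSet y).Nonempty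

/-- An infinite path. -/
def IsIPath (p : ℕ → E) : Prop := ∀ n : ℕ, U.s (p (n + 1)) ∈ U.r (p n)

/-- The principal filter of `A` in the meet-semilattice `𝒢⁰`. -/
def principalFilter (A : Set V) : Set (Set V) := {B | U.IsG0 B ∧ A ⊆ B}

/-- A filter in `𝒢⁰`. -/
def IsFilterG0 (F : Set (Set V)) : Prop :=
  (∀ B ∈ F, U.IsG0 B) ∧ (∅ : Set V) ∉ F ∧ (∀ A ∈ F, ∀ B ∈ F, A ∩ B ∈ F) ∧
    ∀ A ∈ F, ∀ B : Set V, U.IsG0 B → A ⊆ B → B ∈ F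

/-- An ultraset: an element of `𝒢⁰` whose principal filter is an ultrafilter in `𝒢⁰`. -/
def IsUltraset (A : Set V) : Prop :=
  U.IsG0 A ∧ U.IsFilterG0 (U.principalFilter A) ∧
    ∀ F : Set (Set V), U.IsFilterG0 F → U.principalFilter A ⊆ F → F = U.principalFilter A

/-- `A` is an infinite emitter (as a set). -/
def InfEmitterSet (A : Set V) : Prop := {e : E | U.s e ∈ A}.Infinite

end Ultragraph

/-- Concatenation of ultrapaths (raw operation). -/
def concatU {V E : Type} (x y : List E × Set V) : List E × Set V :=
  (x.1 ++ y.1, if y.1 = [] then x.2 ∩ y.2 else y.2)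

/-- Prepend a finite list of edges to an infinite path. -/
def prependL {E : Type} (l : List E) (p : ℕ → E) : ℕ → E :=
  fun n => if h : n < l.length then l.get ⟨n, h⟩ else p (n - l.length)

/-- The periodic infinite path `ccc⋯` determined by a nonempty list `c`. -/
def periodicL {E : Type} (c : List E) (hc : c ≠ []) : ℕ → E :=
  fun n => c.get ⟨n % c.length, Nat.mod_lt n (List.length_pos_iff.mpr hc)⟩

/-- Shift of an infinite path: `τ_{>m}`. -/
def shiftL {E : Type} (m : ℕ) (p : ℕ → E) : ℕ → E := fun n => p (n + m)

/-- Tail-equivalence of infinite paths. -/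
def IPEquiv {E : Type} (p q : ℕ → E) : Prop := ∃ m n : ℕ, shiftL m p = shiftL n q

namespace Ultragraph

variable {V E : Type} (U : Ultragraph V E)

/-- Elements of `X_𝒢 = Y_∞ ∪ 𝔭^∞` (raw data): a finite ultrapath or an infinite path. -/
abbrev XType (V E : Type) : Type := (List E × Set V) ⊕ (ℕ → E)

/-- Concatenation of an ultrapath with an element of `X_𝒢` (raw operation). -/
def concatXel (x : List E × Set V) : XType V E → XType V E
  | Sum.inl y => Sum.inl (concatU x y)
  | Sum.inr p => Sum.inr (prependL x.1 p)

/-- Membership in `X_𝒢`. -/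
def IsXEl : XType V E → Prop
  | Sum.inl y => U.IsUPath y ∧ U.IsUltraset y.2 ∧ U.InfEmitterSet y.2
  | Sum.inr p => U.IsIPath p

/-- The concatenation `x · μ` is defined. -/
def CanConcatX (x : List E × Set V) : XType V E → Prop
  | Sum.inl y => U.CanConcatU x y
  | Sum.inr p => U.s (p 0) ∈ x.2

/-- Raw triples, of which the ultragraph groupoid consists. -/
abbrev Trip (V E : Type) : Type := XType V E × ℤ × XType V E

/-- Membership in the ultragraph groupoid
`𝔊_𝒢 = {(x·μ, |x|−|y|, y·μ) : x, y ∈ 𝔭, μ ∈ X_𝒢, r(x) = r(y), x·μ, y·μ ∈ X_𝒢}`. -/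
def InGrpd (g : Trip V E) : Prop :=
  ∃ (x y : List E × Set V) (μ : XType V E),
    U.IsUPath x ∧ U.IsUPath y ∧ U.IsXEl μ ∧ x.2 = y.2 ∧
    U.CanConcatX x μ ∧ U.CanConcatX y μ ∧
    U.IsXEl (concatXel x μ) ∧ U.IsXEl (concatXel y μ) ∧
    g = (concatXel x μ, (x.1.length : ℤ) - (y.1.length : ℤ), concatXel y μ)

end Ultragraph

/-- Composition in the ultragraph groupoid: `(u,k,v)(v,l,w) = (u,k+l,w)` (raw operation). -/
def compT {V E : Type} (a b : Ultragraph.Trip V E) : Ultragraph.Trip V E :=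
  (a.1, a.2.1 + b.2.1, b.2.2)

namespace Ultragraph

variable {V E : Type} (U : Ultragraph V E)

/-- The degree-`n` component `(𝔊_𝒢)_n` of the ℤ-graded ultragraph groupoid. -/
def gradeSet (n : ℤ) : Set (Trip V E) := {g | U.InGrpd g ∧ g.2.1 = n}

/-- Product of two subsets of the groupoid: `ST = {ab : a ∈ S, b ∈ T composable}`. -/
def setMulG (S T : Set (Trip V E)) : Set (Trip V E) :=
  {c | ∃ a ∈ S, ∃ b ∈ T, a.2.2 = b.1 ∧ c = compT a b}

/-- The carrier of the ultragraph groupoid `𝔊_𝒢`. -/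
def Grpd : Type := {g : Trip V E // U.InGrpd g}

/-- The set `𝒜(x,y)`. -/
def ASetRaw (x y : List E × Set V) : Set (Trip V E) :=
  {g | ∃ μ : XType V E, U.IsXEl μ ∧ U.CanConcatX x μ ∧ U.CanConcatX y μ ∧
      U.IsXEl (concatXel x μ) ∧ U.IsXEl (concatXel y μ) ∧
      g = (concatXel x μ, (x.1.length : ℤ) - (y.1.length : ℤ), concatXel y μ)}

/-- The set `𝒜(x,y)` inside the groupoid. -/
def ASet (x y : List E × Set V) : Set U.Grpd := {g | g.1 ∈ U.ASetRaw x y}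

/-- The basic set `𝒜(x,y,K,Q)`. -/
def ABasic (x y : List E × Set V) (Ke : Set E) (Q : Set (Set V)) : Set U.Grpd :=
  U.ASet x y \
    ((⋃ e ∈ Ke, U.ASet (concatU x ([e], U.r e)) (concatU y ([e], U.r e))) ∪
      ⋃ C ∈ Q, U.ASet (concatU x (([] : List E), C)) (concatU y (([] : List E), C)))

/-- The collection of all basic open sets `𝒜(x,y,K,Q)`. -/
def BasicSets : Set (Set U.Grpd) :=
  {S | ∃ (x y : List E × Set V) (Ke : Set E) (Q : Set (Set V)),
      U.IsUPath x ∧ U.IsUPath y ∧ x.2 = y.2 ∧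
      (∀ e ∈ Ke, U.s e ∈ x.2) ∧ Ke.Finite ∧ (∀ C ∈ Q, U.IsG0 C) ∧ Q.Finite ∧
      S = U.ABasic x y Ke Q}

/-- The topology of the ultragraph groupoid, generated by the sets `𝒜(x,y,K,Q)`. -/
instance : TopologicalSpace U.Grpd := TopologicalSpace.generateFrom U.BasicSets

/-- The unit space `𝔊_𝒢⁽⁰⁾ = {(μ,0,μ) : μ ∈ X_𝒢}` inside the groupoid. -/
def unitSpaceSet : Set U.Grpd := {g | g.1.2.1 = 0 ∧ g.1.1 = g.1.2.2}

end Ultragraph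

/-- The source unit `s(u,k,v) = (v,0,v)` of a raw triple. -/
def srcT {V E : Type} (g : Ultragraph.Trip V E) : Ultragraph.Trip V E := (g.2.2, 0, g.2.2)

/-- The range unit `r(u,k,v) = (u,0,u)` of a raw triple. -/
def rngT {V E : Type} (g : Ultragraph.Trip V E) : Ultragraph.Trip V E := (g.1, 0, g.1)

namespace Ultragraph

variable {V E : Type} (U : Ultragraph V E)

/-- A subset `D` of the unit space is invariant if `s(γ) ∈ D` implies `r(γ) ∈ D`. -/
def InvariantSet (D : Set U.Grpd) : Prop :=
  ∀ g : U.Grpd, ∀ (h1 : U.InGrpd (srcT g.1)) (h2 : U.InGrpd (rngT g.1)),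
    (⟨srcT g.1, h1⟩ : U.Grpd) ∈ D → (⟨rngT g.1, h2⟩ : U.Grpd) ∈ D

/-- The source of `g` lies in `D`. -/
def SrcInD (D : Set U.Grpd) (g : U.Grpd) : Prop :=
  ∃ h : U.InGrpd (srcT g.1), (⟨srcT g.1, h⟩ : U.Grpd) ∈ D

/-- The range of `g` lies in `D`. -/
def RngInD (D : Set U.Grpd) (g : U.Grpd) : Prop :=
  ∃ h : U.InGrpd (rngT g.1), (⟨rngT g.1, h⟩ : U.Grpd) ∈ D

/-- The restriction `𝔊_𝒢|_D` of the groupoid to a subset `D` of the unit space. -/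
def RestrSet (D : Set U.Grpd) : Set U.Grpd := {g | U.SrcInD D g ∧ U.RngInD D g}

/-- The ultragraph groupoid is minimal: the unit space has no nontrivial open
invariant subsets. -/
def IsMinimalGrpd : Prop :=
  ∀ D : Set U.Grpd, D ⊆ U.unitSpaceSet →
    IsOpen {u : U.unitSpaceSet | (u : U.Grpd) ∈ D} → U.InvariantSet D →
      D = ∅ ∨ D = U.unitSpaceSet

end Ultragraph


namespace Ultragraph

variable {V E : Type}

/-- Generators of the ultragraph Leavitt path algebra: `p_A` (`A ∈ 𝒢⁰`), `s_e`, `s*_e`. -/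
inductive LGen (U : Ultragraph V E) : Type
  | pr : {A : Set V // U.IsG0 A} → LGen U
  | ed : E → LGen U
  | st : E → LGen U

variable (K : Type) [Field K] (U : Ultragraph V E)

/-- The defining relations of the ultragraph Leavitt path algebra. -/
inductive LRel : FreeAlgebra K (LGen U) → FreeAlgebra K (LGen U) → Prop
  | pEmpty (h : U.IsG0 (∅ : Set V)) :
      LRel (FreeAlgebra.ι K (LGen.pr ⟨∅, h⟩)) 0
  | pInter (A B : {A : Set V // U.IsG0 A}) :
      LRel (FreeAlgebra.ι K (LGen.pr A) * FreeAlgebra.ι K (LGen.pr B))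
        (FreeAlgebra.ι K (LGen.pr ⟨A.1 ∩ B.1, IsG0.inter A.2 B.2⟩))
  | pUnion (A B : {A : Set V // U.IsG0 A}) :
      LRel (FreeAlgebra.ι K (LGen.pr ⟨A.1 ∪ B.1, IsG0.union A.2 B.2⟩))
        (FreeAlgebra.ι K (LGen.pr A) + FreeAlgebra.ι K (LGen.pr B) -
          FreeAlgebra.ι K (LGen.pr ⟨A.1 ∩ B.1, IsG0.inter A.2 B.2⟩))
  | sLeft (e : E) :
      LRel (FreeAlgebra.ι K (LGen.pr ⟨{U.s e}, IsG0.vertex (U.s e)⟩) * FreeAlgebra.ι K (LGen.ed e))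
        (FreeAlgebra.ι K (LGen.ed e))
  | sRight (e : E) :
      LRel (FreeAlgebra.ι K (LGen.ed e) * FreeAlgebra.ι K (LGen.pr ⟨U.r e, IsG0.range e⟩))
        (FreeAlgebra.ι K (LGen.ed e))
  | stLeft (e : E) :
      LRel (FreeAlgebra.ι K (LGen.pr ⟨U.r e, IsG0.range e⟩) * FreeAlgebra.ι K (LGen.st e))
        (FreeAlgebra.ι K (LGen.st e))
  | stRight (e : E) :
      LRel (FreeAlgebra.ι K (LGen.st e) * FreeAlgebra.ι K (LGen.pr ⟨{U.s e}, IsG0.vertex (U.s e)⟩))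
        (FreeAlgebra.ι K (LGen.st e))
  | ortho (e f : E) (h : e ≠ f) :
      LRel (FreeAlgebra.ι K (LGen.st e) * FreeAlgebra.ι K (LGen.ed f)) 0
  | ck1 (e : E) :
      LRel (FreeAlgebra.ι K (LGen.st e) * FreeAlgebra.ι K (LGen.ed e))
        (FreeAlgebra.ι K (LGen.pr ⟨U.r e, IsG0.range e⟩))
  | ck2 (v : V) (h : U.IsRegular v) :
      LRel (FreeAlgebra.ι K (LGen.pr ⟨{v}, IsG0.vertex v⟩))
        (h.2.toFinset.sum fun e => FreeAlgebra.ι K (LGen.ed e) * FreeAlgebra.ι K (LGen.st e))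

/-- The ultragraph Leavitt path algebra `L_K(𝒢)`, presented by generators and relations.
(For a non-unital `L_K(𝒢)` this is its unitalization; the algebra itself is the
subspace `Lsub` spanned by the monomials `s_α p_A s*_β`.) -/
abbrev LPA : Type := RingQuot (LRel K U)

/-- The generator `p_A`. -/
def pGen (A : Set V) (h : U.IsG0 A) : LPA K U :=
  RingQuot.mkAlgHom K (LRel K U) (FreeAlgebra.ι K (LGen.pr ⟨A, h⟩))

/-- The generator `s_e`. -/
def sGen (e : E) : LPA K U :=
  RingQuot.mkAlgHom K (LRel K U) (FreeAlgebra.ι K (LGen.ed e))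

/-- The generator `s*_e`. -/
def stGen (e : E) : LPA K U :=
  RingQuot.mkAlgHom K (LRel K U) (FreeAlgebra.ι K (LGen.st e))

/-- `s_α` for a list of edges `α`. -/
def sPath (l : List E) : LPA K U := (l.map (sGen K U)).prod

/-- `s*_α` for a list of edges `α`. -/
def stPath (l : List E) : LPA K U := (l.reverse.map (stGen K U)).prod

/-- The degree-`n` homogeneous component
`L_K(𝒢)_n = span_K { s_α p_A s*_β : |α| − |β| = n }`. -/
def homComp (n : ℤ) : Submodule K (LPA K U) :=
  Submodule.span K {x : LPA K U | ∃ (α β : List E) (A : Set V) (hA : U.IsG0 A),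
    (α.length : ℤ) - (β.length : ℤ) = n ∧
    x = sPath K U α * pGen K U A hA * stPath K U β}

/-- The Leavitt path algebra `L_K(𝒢)` itself: the span of all monomials `s_α p_A s*_β`
inside the (possibly unitalized) presented algebra. -/
def Lsub : Submodule K (LPA K U) :=
  Submodule.span K {x : LPA K U | ∃ (α β : List E) (A : Set V) (hA : U.IsG0 A),
    x = sPath K U α * pGen K U A hA * stPath K U β}

/-- `s_α` for a finite path `α ∈ 𝒢*` (with `s_A = p_A` in length zero). -/
def sFMono : (α : Set V ⊕ List E) → U.IsFPath α → LPA K U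
  | Sum.inl A, h => pGen K U A h
  | Sum.inr l, _ => sPath K U l

/-- `s*_α` for a finite path `α ∈ 𝒢*` (with `s*_A = p_A` in length zero). -/
def stFMono : (α : Set V ⊕ List E) → U.IsFPath α → LPA K U
  | Sum.inl A, h => pGen K U A h
  | Sum.inr l, _ => stPath K U l

/-- A (two-sided) ideal of `L_K(𝒢)` (sitting inside the presented algebra). -/
def IsTwoSidedIdealOfL (I : Set (LPA K U)) : Prop :=
  I ⊆ (Lsub K U : Set (LPA K U)) ∧ (0 : LPA K U) ∈ I ∧
    (∀ a ∈ I, ∀ b ∈ I, a + b ∈ I) ∧ (∀ a ∈ I, -a ∈ I) ∧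
    (∀ k : K, ∀ a ∈ I, k • a ∈ I) ∧
    ∀ a ∈ I, ∀ x ∈ (Lsub K U : Set (LPA K U)), a * x ∈ I ∧ x * a ∈ I

/-- A right ideal of `L_K(𝒢)`. -/
def IsRightIdealOfL (I : Set (LPA K U)) : Prop :=
  I ⊆ (Lsub K U : Set (LPA K U)) ∧ (0 : LPA K U) ∈ I ∧
    (∀ a ∈ I, ∀ b ∈ I, a + b ∈ I) ∧ (∀ a ∈ I, -a ∈ I) ∧
    (∀ k : K, ∀ a ∈ I, k • a ∈ I) ∧
    ∀ a ∈ I, ∀ x ∈ (Lsub K U : Set (LPA K U)), a * x ∈ I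

/-- A left ideal of `L_K(𝒢)`. -/
def IsLeftIdealOfL (I : Set (LPA K U)) : Prop :=
  I ⊆ (Lsub K U : Set (LPA K U)) ∧ (0 : LPA K U) ∈ I ∧
    (∀ a ∈ I, ∀ b ∈ I, a + b ∈ I) ∧ (∀ a ∈ I, -a ∈ I) ∧
    (∀ k : K, ∀ a ∈ I, k • a ∈ I) ∧
    ∀ a ∈ I, ∀ x ∈ (Lsub K U : Set (LPA K U)), x * a ∈ I

/-- A subset of `L_K(𝒢)` is graded if each of its elements is a sum of homogeneous
elements lying in it. -/
def IsGradedSet (I : Set (LPA K U)) : Prop :=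
  I ⊆ (AddSubgroup.closure {a : LPA K U | a ∈ I ∧ ∃ n : ℤ, a ∈ homComp K U n} :
    Set (LPA K U))

/-- The right ideal of `L_K(𝒢)` generated by a set. -/
def rIdealGen (S : Set (LPA K U)) : Set (LPA K U) :=
  ⋂₀ {I : Set (LPA K U) | IsRightIdealOfL K U I ∧ S ⊆ I}

/-- The left ideal of `L_K(𝒢)` generated by a set. -/
def lIdealGen (S : Set (LPA K U)) : Set (LPA K U) :=
  ⋂₀ {I : Set (LPA K U) | IsLeftIdealOfL K U I ∧ S ⊆ I}

/-- Powers of an ideal: `J, J², J³, …` (as sets, `idealPow J n = J^{n+1}`). -/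
def idealPow (J : Set (LPA K U)) : ℕ → Set (LPA K U)
  | 0 => J
  | n + 1 => (AddSubgroup.closure
      {z : LPA K U | ∃ a ∈ J, ∃ b ∈ idealPow J n, z = a * b} : Set (LPA K U))

end Ultragraph

namespace Ultragraph

variable {V E : Type} (U : Ultragraph V E)

/-- Condition (2) of the strong-grading criterion: for every `k ∈ ℕ` and every infinite
path `p`, there are an initial subpath `x` of `p` and a finite path `y ∈ 𝒢*` with
`r(x) = r(y)` and `|y| − |x| = k`. -/
def GradedCond2 : Prop :=
  ∀ (k : ℕ) (p : ℕ → E), U.IsIPath p →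
    ∃ n : ℕ, 0 < n ∧ ∃ y : List E, y ≠ [] ∧ U.IsEdgePath y ∧
      U.rList y = U.r (p (n - 1)) ∧ (y.length : ℤ) - (n : ℤ) = (k : ℤ)

variable (K : Type) [Field K]

/-- The projection onto the degree-`n` homogeneous component (obtained by choice from the
internal decomposition of the grading; `0` if no such family of projections exists). -/
noncomputable def gradedProj (n : ℤ) : LPA K U →ₗ[K] LPA K U :=
  if h : ∃ P : ℤ → (LPA K U →ₗ[K] LPA K U),
      (∀ (m : ℤ) (x : LPA K U), P m x ∈ homComp K U m) ∧
      (∀ m : ℤ, ∀ x ∈ homComp K U m, P m x = x) ∧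
      (∀ m k' : ℤ, m ≠ k' → ∀ x ∈ homComp K U k', P m x = 0)
  then h.choose n else 0

/-- Multiplication of the smash product `L_K(𝒢) # ℤ`:
`(a p_m)(b p_n) = a·b_{m−n} p_n`, where elements of `L_K(𝒢) # ℤ` are finitely
supported functions `ℤ →₀ L_K(𝒢)`. -/
noncomputable def smashMul (x y : ℤ →₀ LPA K U) : ℤ →₀ LPA K U :=
  x.sum fun m a => y.sum fun n b => Finsupp.single n (a * gradedProj U K (m - n) b)

end Ultragraph

/-- The skew product ultragraph `𝒢 ×₁ ℤ`. -/
def Ultragraph.skewZ {V E : Type} (U : Ultragraph V E) : Ultragraph (V × ℤ) (E × ℤ) where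
  s := fun en => (U.s en.1, en.2)
  r := fun en => (fun w => (w, en.2 - 1)) '' U.r en.1
  r_nonempty := fun en => (U.r_nonempty en.1).image _

namespace Ultragraph

variable {V E : Type} (U : Ultragraph V E) (K : Type) [Field K]

/-- Composability of two groupoid elements. -/
def Composable (a b : U.Grpd) : Prop := a.1.2.2 = b.1.1

/-- Convolution product of functions on the groupoid:
`(f * g)(γ) = Σ_{γ = αβ} f(α) g(β)`. -/
noncomputable def convK (f g : U.Grpd → K) : U.Grpd → K :=
  fun γ => ∑ᶠ q : {q : U.Grpd × U.Grpd // U.Composable q.1 q.2 ∧ compT q.1.1 q.2.1 = γ.1},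
    f q.1.1 * g q.1.2

/-- A compact open bisection of the ultragraph groupoid. -/
def IsCOB (W : Set U.Grpd) : Prop :=
  IsCompact W ∧ IsOpen W ∧
    (∀ a ∈ W, ∀ b ∈ W, a.1.2.2 = b.1.2.2 → a = b) ∧
    ∀ a ∈ W, ∀ b ∈ W, a.1.1 = b.1.1 → a = b

/-- The Steinberg algebra `A_K(𝔊_𝒢)` (as a subspace of `K^{𝔊_𝒢}`): the `K`-span of the
characteristic functions of compact open bisections. -/
def SteinbergSpan : Submodule K (U.Grpd → K) :=
  Submodule.span K {f : U.Grpd → K |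
    ∃ W : Set U.Grpd, U.IsCOB W ∧ f = Set.indicator W fun _ => (1 : K)}

/-- The span of characteristic functions of `n`-homogeneous compact open bisections:
the degree-`n` component `A_K(𝔊_𝒢)_n`. -/
def SteinbergComp (n : ℤ) : Submodule K (U.Grpd → K) :=
  Submodule.span K {f : U.Grpd → K |
    ∃ W : Set U.Grpd, U.IsCOB W ∧ W ⊆ {g : U.Grpd | g.1.2.1 = n} ∧
      f = Set.indicator W fun _ => (1 : K)}

end Ultragraph

namespace Ultragraph

variable {V E : Type} (K : Type) [Field K] (U : Ultragraph V E)

/-- The `K`-vector space `V_A` (`A = r(x)`), with basis `{z ∈ 𝔭 : r(z) = A}`. -/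
abbrev ModVx (A : Set V) : Type :=
  {z : List E × Set V // U.IsUPath z ∧ z.2 = A} →₀ K

/-- The prescribed `L_K(𝒢)`-action on the basis of `V_A`, together with compatibility of
the `K`- and `L_K(𝒢)`-scalar multiplications. -/
def VxHyps (A : Set V) [instM : Module (LPA K U) (ModVx K U A)] : Prop :=
  (∀ (k : K) (a : LPA K U) (m : ModVx K U A), (k • a) • m = k • (a • m)) ∧
  (∀ (B : Set V) (hB : U.IsG0 B) (z : {z : List E × Set V // U.IsUPath z ∧ z.2 = A}),
      ((B ∩ U.srcSet z.1).Nonempty →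
        pGen K U B hB • Finsupp.single z (1 : K) = Finsupp.single z (1 : K)) ∧
      (¬ (B ∩ U.srcSet z.1).Nonempty →
        pGen K U B hB • Finsupp.single z (1 : K) = 0)) ∧
  (∀ (e : E) (z : {z : List E × Set V // U.IsUPath z ∧ z.2 = A}),
      ((U.r e ∩ U.srcSet z.1).Nonempty →
        ∀ z' : {z : List E × Set V // U.IsUPath z ∧ z.2 = A}, z'.1 = (e :: z.1.1, z.1.2) →
          sGen K U e • Finsupp.single z (1 : K) = Finsupp.single z' (1 : K)) ∧
      (¬ (U.r e ∩ U.srcSet z.1).Nonempty →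
        sGen K U e • Finsupp.single z (1 : K) = 0)) ∧
  (∀ (e : E) (z : {z : List E × Set V // U.IsUPath z ∧ z.2 = A}),
      (∀ l : List E, z.1.1 = e :: l →
        ∀ z' : {z : List E × Set V // U.IsUPath z ∧ z.2 = A}, z'.1 = (l, z.1.2) →
          stGen K U e • Finsupp.single z (1 : K) = Finsupp.single z' (1 : K)) ∧
      ((∀ l : List E, z.1.1 ≠ e :: l) →
        stGen K U e • Finsupp.single z (1 : K) = 0))

/-- The `K`-vector space `V_{[p]}`, with basis the tail-equivalence class `[p]`. -/
abbrev ModVp (p : ℕ → E) : Type :=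
  {q : ℕ → E // U.IsIPath q ∧ IPEquiv p q} →₀ K

/-- The prescribed `L_K(𝒢)`-action on the basis of `V_{[p]}`, together with compatibility
of the `K`- and `L_K(𝒢)`-scalar multiplications. -/
def VpHyps (p : ℕ → E) [instM : Module (LPA K U) (ModVp K U p)] : Prop :=
  (∀ (k : K) (a : LPA K U) (m : ModVp K U p), (k • a) • m = k • (a • m)) ∧
  (∀ (B : Set V) (hB : U.IsG0 B) (q : {q : ℕ → E // U.IsIPath q ∧ IPEquiv p q}),
      (U.s (q.1 0) ∈ B →
        pGen K U B hB • Finsupp.single q (1 : K) = Finsupp.single q (1 : K)) ∧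
      (U.s (q.1 0) ∉ B →
        pGen K U B hB • Finsupp.single q (1 : K) = 0)) ∧
  (∀ (e : E) (q : {q : ℕ → E // U.IsIPath q ∧ IPEquiv p q}),
      (U.s (q.1 0) ∈ U.r e →
        ∀ q' : {q : ℕ → E // U.IsIPath q ∧ IPEquiv p q}, q'.1 = prependL [e] q.1 →
          sGen K U e • Finsupp.single q (1 : K) = Finsupp.single q' (1 : K)) ∧
      (U.s (q.1 0) ∉ U.r e →
        sGen K U e • Finsupp.single q (1 : K) = 0)) ∧
  (∀ (e : E) (q : {q : ℕ → E // U.IsIPath q ∧ IPEquiv p q}),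
      (q.1 0 = e →
        ∀ q' : {q : ℕ → E // U.IsIPath q ∧ IPEquiv p q}, q'.1 = shiftL 1 q.1 →
          stGen K U e • Finsupp.single q (1 : K) = Finsupp.single q' (1 : K)) ∧
      (q.1 0 ≠ e →
        stGen K U e • Finsupp.single q (1 : K) = 0))

/-- A rational infinite path: tail-equivalent to `c^∞` for some cycle `c`. -/
def IsRationalP (p : ℕ → E) : Prop :=
  ∃ (c : List E) (hc : c ≠ []), U.IsCycle c ∧ IPEquiv p (periodicL c hc)

/-- The Laurent polynomial ring `K[t,t⁻¹]`. -/
abbrev LaurK : Type := LaurentPolynomial K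

/-- The quotient `K[t,t⁻¹]/(f)`. -/
abbrev QuotF (f : LaurK K) : Type := LaurK K ⧸ Ideal.span ({f} : Set (LaurK K))

/-- The prescribed right `K[t,t⁻¹]`-structure on `V_{[p]}` induced by the isotropy
action: for `p ∼ c^∞` with `c` a cycle, `t` acts by shifting by `|c|` (prepending `c`);
together with compatibility with the `K`-structure. -/
def VpLaurHyps (p : ℕ → E) [instF : Module (LaurK K) (ModVp K U p)] : Prop :=
  (∀ (k : K) (m : ModVp K U p), (algebraMap K (LaurK K) k) • m = k • m) ∧
  (∀ (c : List E) (hc : c ≠ []), U.IsCycle c → IPEquiv p (periodicL c hc) →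
    ∀ (q q' : {q : ℕ → E // U.IsIPath q ∧ IPEquiv p q}), q.1 = prependL c q'.1 →
      (LaurentPolynomial.T 1 : LaurK K) • Finsupp.single q' (1 : K) =
        Finsupp.single q (1 : K))

/-- The module `V^f_{[p]} = V_{[p]} ⊗_{K[t,t⁻¹]} K[t,t⁻¹]/(f)`. -/
abbrev ModVf (p : ℕ → E) (f : LaurK K) [instF : Module (LaurK K) (ModVp K U p)] : Type :=
  TensorProduct (LaurK K) (ModVp K U p) (QuotF K f)

/-- The prescribed `L_K(𝒢)`-action on `V^f_{[p]}`: the action on simple tensors is the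
`V_{[p]}`-action on the first factor, and it commutes with the `K[t,t⁻¹]`-action. -/
def VfHyps (p : ℕ → E) (f : LaurK K) [instF : Module (LaurK K) (ModVp K U p)]
    [instL : Module (LPA K U) (ModVf K U p f)] : Prop :=
  (∀ (u : LaurK K) (a : LPA K U) (m : ModVf K U p f), a • u • m = u • a • m) ∧
  (∀ (B : Set V) (hB : U.IsG0 B) (q : {q : ℕ → E // U.IsIPath q ∧ IPEquiv p q})
      (w : QuotF K f),
      (U.s (q.1 0) ∈ B →
        pGen K U B hB • (Finsupp.single q (1 : K) ⊗ₜ[LaurK K] w) =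
          Finsupp.single q (1 : K) ⊗ₜ[LaurK K] w) ∧
      (U.s (q.1 0) ∉ B →
        pGen K U B hB • (Finsupp.single q (1 : K) ⊗ₜ[LaurK K] w) = 0)) ∧
  (∀ (e : E) (q : {q : ℕ → E // U.IsIPath q ∧ IPEquiv p q}) (w : QuotF K f),
      (U.s (q.1 0) ∈ U.r e →
        ∀ q' : {q : ℕ → E // U.IsIPath q ∧ IPEquiv p q}, q'.1 = prependL [e] q.1 →
          sGen K U e • (Finsupp.single q (1 : K) ⊗ₜ[LaurK K] w) =
            Finsupp.single q' (1 : K) ⊗ₜ[LaurK K] w) ∧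
      (U.s (q.1 0) ∉ U.r e →
        sGen K U e • (Finsupp.single q (1 : K) ⊗ₜ[LaurK K] w) = 0)) ∧
  (∀ (e : E) (q : {q : ℕ → E // U.IsIPath q ∧ IPEquiv p q}) (w : QuotF K f),
      (q.1 0 = e →
        ∀ q' : {q : ℕ → E // U.IsIPath q ∧ IPEquiv p q}, q'.1 = shiftL 1 q.1 →
          stGen K U e • (Finsupp.single q (1 : K) ⊗ₜ[LaurK K] w) =
            Finsupp.single q' (1 : K) ⊗ₜ[LaurK K] w) ∧
      (q.1 0 ≠ e →
        stGen K U e • (Finsupp.single q (1 : K) ⊗ₜ[LaurK K] w) = 0))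

end Ultragraph

namespace Ultragraph

variable {V E : Type} (U : Ultragraph V E)

/-- `μ` is eventually periodic: `μ = p·σσσ⋯` for a finite list `p` and a cycle `σ`. -/
def IsEvPeriodic (μ : XType V E) : Prop :=
  ∃ (l c : List E) (hc : c ≠ []), U.IsCycle c ∧ μ = Sum.inr (prependL l (periodicL c hc))

end Ultragraph


section StrongEffHelpers

open Ultragraph

variable {V E : Type} {U : Ultragraph V E}

theorem chain'_iff_get_old {α : Type} {R : α → α → Prop} {l : List α} :
    List.Chain' R l ↔ ∀ (i : ℕ) (h : i < l.length - 1),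
      R (l.get ⟨i, by omega⟩) (l.get ⟨i + 1, by omega⟩) := by
  unfold List.Chain'
  rw [List.isChain_iff_getElem]
  constructor
  · intro h i hi; exact h i (by omega)
  · intro h i hi; exact h i (by omega)

theorem getLast_eq_get_old {α : Type} (l : List α) (h : l ≠ []) :
    l.getLast h = l.get ⟨l.length - 1, by
      have := List.length_pos_iff.mpr h; omega⟩ := by
  rw [List.getLast_eq_getElem]; rfl

theorem get_append_old {α : Type} {l₁ l₂ : List α} (n : ℕ) (h : n < l₁.length) :
    (l₁ ++ l₂).get ⟨n, by simp; omega⟩ = l₁.get ⟨n, h⟩ := by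
  simp [List.getElem_append_left h]

theorem get_append_right_old {α : Type} (l₁ l₂ : List α) {n : ℕ} (h₁ : l₁.length ≤ n)
    {h' : n < (l₁ ++ l₂).length} {h'' : n - l₁.length < l₂.length} :
    (l₁ ++ l₂).get ⟨n, h'⟩ = l₂.get ⟨n - l₁.length, h''⟩ := by
  simp [List.getElem_append_right h₁]

theorem chain'_append_old {α : Type} {R : α → α → Prop} {l₁ l₂ : List α} :
    List.Chain' R (l₁ ++ l₂) ↔ List.Chain' R l₁ ∧ List.Chain' R l₂ ∧
      ∀ x ∈ l₁.getLast?, ∀ y ∈ l₂.head?, R x y := by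
  unfold List.Chain'
  exact List.isChain_append

theorem getLast_append'_old {α : Type} (l₁ l₂ : List α) (h : l₂ ≠ []) :
    (l₁ ++ l₂).getLast (List.append_ne_nil_of_right_ne_nil l₁ h) = l₂.getLast h :=
  List.getLast_append_of_ne_nil _ h

theorem get_singleton_old {α : Type} (a : α) (n : Fin [a].length) : [a].get n = a := by
  simp

theorem prependL_lt' {l : List E} {f : ℕ → E} {n : ℕ} (h : n < l.length) :
    prependL l f n = l.get ⟨n, h⟩ := dif_pos h

theorem prependL_ge' {l : List E} {f : ℕ → E} {n : ℕ} (h : l.length ≤ n) :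
    prependL l f n = f (n - l.length) := dif_neg (by omega)

theorem prependL_nil' (f : ℕ → E) : prependL ([] : List E) f = f := by
  funext n; simp [prependL]

theorem shiftL_prependL' (l : List E) (f : ℕ → E) : shiftL l.length (prependL l f) = f := by
  funext n; simp only [shiftL]; rw [prependL_ge' (by omega)]; congr 1; omega

theorem prependL_shiftL' {l : List E} {f : ℕ → E}
    (hpre : ∀ (n : ℕ) (h : n < l.length), f n = l.get ⟨n, h⟩) :
    prependL l (shiftL l.length f) = f := by
  funext n
  by_cases h : n < l.length
  · rw [prependL_lt' h]; exact (hpre n h).symm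
  · rw [prependL_ge' (by omega)]; simp only [shiftL]; congr 1; omega

theorem head?_get' {l : List E} (h : l ≠ []) :
    l.head? = some (l.get ⟨0, List.length_pos_iff.mpr h⟩) := by
  cases l with
  | nil => exact absurd rfl h
  | cons a as => rfl

theorem rList_eq' {l : List E} (h : l ≠ []) : U.rList l = U.r (l.getLast h) := by
  unfold Ultragraph.rList
  rw [List.getLast?_eq_getLast h]

theorem isIPath_shiftL' {f : ℕ → E} (hf : U.IsIPath f) (m : ℕ) : U.IsIPath (shiftL m f) := by
  intro n
  have := hf (n + m)
  simpa only [shiftL, show n + m + 1 = n + 1 + m by omega] using this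

theorem isIPath_prependL' {l : List E} {f : ℕ → E} (hl : U.IsEdgePath l)
    (hf : U.IsIPath f) (hconn : ∀ h : l ≠ [], U.s (f 0) ∈ U.r (l.getLast h)) :
    U.IsIPath (prependL l f) := by
  intro n
  by_cases h1 : n + 1 < l.length
  · rw [prependL_lt' h1, prependL_lt' (by omega)]
    exact List.isChain_iff_getElem.mp hl n (by omega)
  · by_cases h2 : n + 1 = l.length
    · have hne : l ≠ [] := by intro hh; rw [hh] at h2; simp at h2
      rw [prependL_lt' (by omega), prependL_ge' (by omega)]
      rw [show n + 1 - l.length = 0 by omega]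
      have hcl := hconn hne
      rw [getLast_eq_get_old] at hcl
      have : (⟨l.length - 1, by omega⟩ : Fin l.length) = ⟨n, by omega⟩ := by
        rw [Fin.mk.injEq]; omega
      rwa [this] at hcl
    · rw [prependL_ge' (by omega), prependL_ge' (by omega)]
      rw [show n + 1 - l.length = (n - l.length) + 1 by omega]
      exact hf _

theorem unit_mem' {f : ℕ → E} (hf : U.IsIPath f) :
    U.InGrpd ((Sum.inr f : XType V E), (0 : ℤ), (Sum.inr f : XType V E)) := by
  refine ⟨(([] : List E), {U.s (f 0)}), (([] : List E), {U.s (f 0)}), Sum.inr f,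
    ⟨List.isChain_nil, IsG0.vertex _, fun e he => by simp at he⟩,
    ⟨List.isChain_nil, IsG0.vertex _, fun e he => by simp at he⟩,
    hf, rfl, rfl, rfl, ?_, ?_, ?_⟩
  · show U.IsXEl (Sum.inr (prependL ([] : List E) f))
    rw [prependL_nil']; exact hf
  · show U.IsXEl (Sum.inr (prependL ([] : List E) f))
    rw [prependL_nil']; exact hf
  · simp [Ultragraph.concatXel, prependL_nil']

theorem concatU_edge' (x : List E × Set V) (e : E) (B : Set V) :
    concatU x ([e], B) = (x.1 ++ [e], B) := by simp [concatU]

theorem concatU_nilC' (x : List E × Set V) (C : Set V) :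
    concatU x (([] : List E), C) = (x.1, x.2 ∩ C) := by simp [concatU]

end StrongEffHelpers

open Ultragraph in
/-- If `𝒢` (without sinks) satisfies Condition (K), then `𝔊_𝒢` is
strongly effective: for every nonempty closed invariant subset `D` of the unit space,
the restriction `𝔊_𝒢|_D` is effective. -/
theorem ultragraph_groupoid_strongly_effective
    (V E : Type) [Countable V] [Countable E] (U : Ultragraph V E)
    (hns : U.HasNoSinks) (hK : U.ConditionK) :
    ∀ D : Set U.Grpd, D ⊆ U.unitSpaceSet → D.Nonempty →
      IsClosed {u : U.unitSpaceSet | (u : U.Grpd) ∈ D} → U.InvariantSet D →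
      interior {g : U.RestrSet D |
        (g : U.Grpd).1.1 = (g : U.Grpd).1.2.2 ∧ (g : U.Grpd).1.2.1 ≠ 0} = ∅ := by
  classical
  intro D hDsub hDne _hDcl hDinv
  rw [Set.eq_empty_iff_forall_notMem]
  intro g0 hg0
  have hbad0 := interior_subset hg0
  have hbad : (g0.val.1.1 = g0.val.1.2.2 ∧ g0.val.1.2.1 ≠ 0) := hbad0
  obtain ⟨O, hOsub, hOopen, hg0O⟩ := mem_interior.mp hg0
  obtain ⟨W, hWopen, hWpre⟩ := isOpen_induced_iff.mp hOopen
  have hg0W : g0.val ∈ W := by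
    have : g0 ∈ Subtype.val ⁻¹' W := by rw [hWpre]; exact hg0O
    exact this
  have hbasis := TopologicalSpace.isTopologicalBasis_of_subbasis
    (rfl : (inferInstance : TopologicalSpace U.Grpd) = TopologicalSpace.generateFrom U.BasicSets)
  obtain ⟨B, hBmem, hg0B, hBW⟩ := hbasis.exists_subset_of_mem_open hg0W hWopen
  obtain ⟨t, ⟨htfin, htsub⟩, rfl⟩ := hBmem
  -- membership of any element of `RestrSet D ∩ W` in the "bad" set
  have hWbad : ∀ (h : U.Grpd), h ∈ U.RestrSet D → h ∈ W →
      h.1.1 = h.1.2.2 ∧ h.1.2.1 ≠ 0 := by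
    intro h hres hW
    have : (⟨h, hres⟩ : U.RestrSet D) ∈ Subtype.val ⁻¹' W := hW
    rw [hWpre] at this
    exact hOsub this
  rcases t.eq_empty_or_nonempty with rfl | ⟨S0, hS0⟩
  · -- empty intersection: use a unit from D
    obtain ⟨u, huD⟩ := hDne
    obtain ⟨⟨a, kk, b⟩, hu2⟩ := u
    obtain ⟨hk0, hab⟩ := hDsub huD
    simp only at hk0 hab
    subst hk0; subst hab
    have hrestr : (⟨(a, 0, a), hu2⟩ : U.Grpd) ∈ U.RestrSet D :=
      ⟨⟨hu2, huD⟩, ⟨hu2, huD⟩⟩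
    have := hWbad ⟨(a, 0, a), hu2⟩ hrestr (hBW (by simp; exact Set.mem_univ _))
    exact this.2 rfl
  · -- choose witnesses for each basic set in `t`
    obtain ⟨xd, yd, Kd, Qd, hspec⟩ :
        ∃ (xd yd : Set U.Grpd → List E × Set V) (Kd : Set U.Grpd → Set E)
          (Qd : Set U.Grpd → Set (Set V)), ∀ S ∈ t,
            U.IsUPath (xd S) ∧ U.IsUPath (yd S) ∧ (xd S).2 = (yd S).2 ∧
            (∀ e ∈ Kd S, U.s e ∈ (xd S).2) ∧ (Kd S).Finite ∧
            (∀ C ∈ Qd S, U.IsG0 C) ∧ (Qd S).Finite ∧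
            S = U.ABasic (xd S) (yd S) (Kd S) (Qd S) := by
      refine ⟨fun S => if h : S ∈ U.BasicSets then h.choose else (([] : List E), (∅ : Set V)),
        fun S => if h : S ∈ U.BasicSets then h.choose_spec.choose else (([] : List E), (∅ : Set V)),
        fun S => if h : S ∈ U.BasicSets then h.choose_spec.choose_spec.choose else (∅ : Set E),
        fun S => if h : S ∈ U.BasicSets then h.choose_spec.choose_spec.choose_spec.choose
          else (∅ : Set (Set V)), ?_⟩
      intro S hS
      have h := htsub hS
      simp only [dif_pos h]
      exact h.choose_spec.choose_spec.choose_spec.choose_spec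
    have hg0B' : ∀ S ∈ t, g0.val ∈ U.ABasic (xd S) (yd S) (Kd S) (Qd S) := by
      intro S hS
      have := Set.mem_sInter.mp hg0B S hS
      rwa [(hspec S hS).2.2.2.2.2.2.2] at this
    have hAS : ∀ S ∈ t, g0.val.1 ∈ U.ASetRaw (xd S) (yd S) := fun S hS => (hg0B' S hS).1
    have hNotSub : ∀ S ∈ t, g0.val ∉
        ((⋃ e ∈ Kd S, U.ASet (concatU (xd S) ([e], U.r e)) (concatU (yd S) ([e], U.r e))) ∪
          ⋃ C ∈ Qd S, U.ASet (concatU (xd S) (([] : List E), C))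
            (concatU (yd S) (([] : List E), C))) := fun S hS => (hg0B' S hS).2
    set k := g0.val.1.2.1 with hkdef
    obtain ⟨μ0, hX0, hcx0, hcy0, hXx0, hXy0, heq0⟩ := hAS S0 hS0
    rcases μ0 with w | ν
    · -- finite ultrapath: impossible since k ≠ 0
      exfalso
      have h11 : g0.val.1.1 = Sum.inl (concatU (xd S0) w) := by rw [heq0]; rfl
      have h22 : g0.val.1.2.2 = Sum.inl (concatU (yd S0) w) := by rw [heq0]; rfl
      have hlist : (xd S0).1 ++ w.1 = (yd S0).1 ++ w.1 := by
        have := hbad.1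
        rw [h11, h22] at this
        exact congrArg Prod.fst (Sum.inl.inj this)
      have hlen : (xd S0).1.length = (yd S0).1.length := by
        have := congrArg List.length hlist
        simpa using this
      have hk0 : k = 0 := by
        have := congrArg (fun z => z.2.1) heq0
        simp only at this
        rw [← hkdef] at this
        omega
      exact hbad.2 hk0
    -- the infinite path p
    set p := prependL (xd S0).1 ν with hpdef
    have hg11 : g0.val.1.1 = Sum.inr p := by rw [heq0]; rfl
    have hp : U.IsIPath p := hXx0
    have hg22 : g0.val.1.2.2 = Sum.inr p := by rw [← hbad.1]; exact hg11
    -- main data for each S ∈ t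
    have hmain : ∀ S ∈ t,
        (∀ (n : ℕ) (h : n < (xd S).1.length), p n = (xd S).1.get ⟨n, h⟩) ∧
        (∀ (n : ℕ) (h : n < (yd S).1.length), p n = (yd S).1.get ⟨n, h⟩) ∧
        (∀ m : ℕ, p (m + (xd S).1.length) = p (m + (yd S).1.length)) ∧
        (((xd S).1.length : ℤ) - ((yd S).1.length : ℤ) = k) ∧
        (U.s (p (xd S).1.length) ∈ (xd S).2) := by
      intro S hS
      obtain ⟨μ, hX, hcx, hcy, hXx, hXy, heq⟩ := hAS S hS
      have h11 : concatXel (xd S) μ = Sum.inr p := by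
        rw [← hg11, heq]; try rfl
      rcases μ with w | ν'
      · exact absurd h11 (by simp [Ultragraph.concatXel])
      have hxν : prependL (xd S).1 ν' = p := Sum.inr.inj h11
      have hν' : ν' = shiftL (xd S).1.length p := by rw [← hxν, shiftL_prependL']
      have h22 : prependL (yd S).1 ν' = p := by
        apply Sum.inr.inj
        show concatXel (yd S) (Sum.inr ν') = Sum.inr p
        rw [← hg22, heq]; try rfl
      refine ⟨?_, ?_, ?_, ?_, ?_⟩
      · intro n h; rw [← hxν, prependL_lt' h]
      · intro n h; rw [← h22, prependL_lt' h]
      · intro m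
        have e1 : p (m + (xd S).1.length) = ν' m := by
          rw [← hxν, prependL_ge' (by omega)]; congr 1; omega
        have e2 : p (m + (yd S).1.length) = ν' m := by
          rw [← h22, prependL_ge' (by omega)]; congr 1; omega
        rw [e1, e2]
      · have := congrArg (fun z => z.2.1) heq
        simp only at this
        rw [← hkdef] at this
        omega
      · have hc : U.s (ν' 0) ∈ (xd S).2 := hcx
        rw [hν'] at hc
        simpa [shiftL] using hc
    -- period of p
    have hd : 0 < k.natAbs := Int.natAbs_pos.mpr hbad.2
    set d := k.natAbs with hddef
    set M := min (xd S0).1.length (yd S0).1.length with hMdef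
    have hperGen : ∀ f : ℕ → E,
        (∀ m : ℕ, f (m + (xd S0).1.length) = f (m + (yd S0).1.length)) →
        ∀ n, M ≤ n → f (n + d) = f n := by
      intro f hf n hn
      have hkk := (hmain S0 hS0).2.2.2.1
      rcases le_total (yd S0).1.length (xd S0).1.length with hba | hab
      · have h1 := hf (n - (yd S0).1.length)
        rwa [show n - (yd S0).1.length + (xd S0).1.length = n + d by omega,
          show n - (yd S0).1.length + (yd S0).1.length = n by omega] at h1
      · have h1 := hf (n - (xd S0).1.length)
        rw [show n - (xd S0).1.length + (xd S0).1.length = n by omega,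
          show n - (xd S0).1.length + (yd S0).1.length = n + d by omega] at h1
        exact h1.symm
    have hper : ∀ n, M ≤ n → p (n + d) = p n := hperGen p (hmain S0 hS0).2.2.1
    -- the bound N0
    set N0 := max (htfin.toFinset.sup (fun S => max (xd S).1.length (yd S).1.length) + 1)
      (M + d) with hN0def
    have hN0S : ∀ S ∈ t, max (xd S).1.length (yd S).1.length < N0 := by
      intro S hS
      have h1 := Finset.le_sup (f := fun S => max (xd S).1.length (yd S).1.length)
        (htfin.mem_toFinset.mpr hS)
      omega
    have hMd : M + d ≤ N0 := by omega
    have hN0pos : 0 < N0 := by omega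
    -- the recurring vertex v and the first return time N1
    set v := U.s (p N0) with hvdef
    have hex : ∃ j, U.s (p (N0 + 1 + j)) = v := by
      refine ⟨d - 1, ?_⟩
      rw [show N0 + 1 + (d - 1) = N0 + d by omega, hper N0 (by omega)]
    set j0 := Nat.find hex with hj0def
    set N1 := N0 + 1 + j0 with hN1def
    have hN1v : U.s (p N1) = v := Nat.find_spec hex
    have hN1min : ∀ i, N0 < i → i < N1 → U.s (p i) ≠ v := by
      intro i h1 h2 hcon
      exact Nat.find_min hex (show i - N0 - 1 < j0 by omega)
        (by rw [show N0 + 1 + (i - N0 - 1) = i by omega]; exact hcon)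
    have hN1d : N1 ≤ N0 + d := by
      have : j0 ≤ d - 1 := Nat.find_le (by
        rw [show N0 + 1 + (d - 1) = N0 + d by omega, hper N0 (by omega)])
      omega
    have hN0N1 : N0 < N1 := by omega
    -- the first-return path c
    set L := N1 - N0 with hLdef
    have hLpos : 0 < L := by omega
    set c := List.ofFn (fun j : Fin L => p (N0 + j.val)) with hcdef
    have hclen : c.length = L := by rw [hcdef]; exact List.length_ofFn
    have hcget : ∀ (j : ℕ) (h : j < c.length), c.get ⟨j, h⟩ = p (N0 + j) := by
      intro j h
      simp [hcdef]
    have hcne : c ≠ [] := by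
      intro h
      rw [h] at hclen
      simp at hclen
      omega
    have hcFR : U.IsFirstReturn v c := by
      refine ⟨hcne, ?_, ?_, ?_, ?_⟩
      · show List.Chain' U.Adj c
        rw [chain'_iff_get_old]
        intro i h
        rw [hcget i (by omega), hcget (i + 1) (by omega)]
        show U.s (p (N0 + (i + 1))) ∈ U.r (p (N0 + i))
        rw [show N0 + (i + 1) = (N0 + i) + 1 by omega]
        exact hp (N0 + i)
      · refine ⟨p N0, ?_, hvdef.symm⟩
        rw [head?_get' hcne, hcget 0 (by omega), Nat.add_zero]
      · rw [rList_eq' hcne, getLast_eq_get_old]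
        rw [hcget (c.length - 1) (by omega)]
        rw [show N0 + (c.length - 1) = N1 - 1 by omega]
        have h := hp (N1 - 1)
        rw [show N1 - 1 + 1 = N1 by omega] at h
        rw [← hN1v]
        exact h
      · intro i h hipos
        rw [hcget i h]
        exact hN1min (N0 + i) (by omega) (by omega)
    -- a different first-return path c' via Condition (K)
    rcases hK v with hnone | ⟨c1, c2, h1, h2, h12⟩
    · exact absurd hcFR (hnone c)
    set c' := if c1 = c then c2 else c1 with hc'def
    have hc'FR : U.IsFirstReturn v c' := by
      rw [hc'def]; split_ifs; exacts [h2, h1]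
    have hc'ne : c' ≠ c := by
      rw [hc'def]; split_ifs with hcc
      · intro hh; exact h12 (hcc.trans hh.symm)
      · exact hcc
    have hc'nil : c' ≠ [] := hc'FR.1
    have hLcpos : 0 < c'.length := List.length_pos_iff.mpr hc'nil
    have hc'head : U.s (c'.get ⟨0, hLcpos⟩) = v := by
      obtain ⟨e, he1, he2⟩ := hc'FR.2.2.1
      rw [head?_get' hc'nil] at he1
      rw [Option.some.inj he1]
      exact he2
    have hc'last : v ∈ U.r (c'.getLast hc'nil) := by
      have h := hc'FR.2.2.2.1
      rwa [rList_eq' hc'nil] at h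
    have hc'chain : U.IsEdgePath c' := hc'FR.2.1
    have hc'int : ∀ (i : ℕ) (h : i < c'.length), 0 < i → U.s (c'.get ⟨i, h⟩) ≠ v :=
      hc'FR.2.2.2.2
    -- the prefix list pl
    set pl := List.ofFn (fun i : Fin N0 => p i.val) with hpldef
    have hpllen : pl.length = N0 := by rw [hpldef]; exact List.length_ofFn
    have hplget : ∀ (j : ℕ) (h : j < pl.length), pl.get ⟨j, h⟩ = p j := by
      intro j h
      simp [hpldef]
    have hplne : pl ≠ [] := by intro h; rw [h] at hpllen; simp at hpllen; omega
    have hplchain : U.IsEdgePath pl := by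
      show List.Chain' U.Adj pl
      rw [chain'_iff_get_old]
      intro i h
      rw [hplget i (by omega), hplget (i + 1) (by omega)]
      exact hp i
    -- the perturbed path p'
    set p' : ℕ → E := fun n =>
      if n < N0 then p n
      else if h2 : n - N0 < c'.length then c'.get ⟨n - N0, h2⟩
      else p (n - c'.length) with hp'def
    have hp'lt : ∀ n, n < N0 → p' n = p n := by
      intro n h; simp only [hp'def]; rw [if_pos h]
    have hp'mid : ∀ (j : ℕ) (h : j < c'.length), p' (N0 + j) = c'.get ⟨j, h⟩ := by
      intro j h
      simp only [hp'def]
      rw [if_neg (by omega), dif_pos (show N0 + j - N0 < c'.length by omega)]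
      simp only [Nat.add_sub_cancel_left]
    have hp'tail : ∀ j : ℕ, p' (N0 + c'.length + j) = p (N0 + j) := by
      intro j
      simp only [hp'def]
      rw [if_neg (by omega), dif_neg (by omega)]
      congr 1
      omega
    have hp'geq : prependL (pl ++ c') (shiftL N0 p) = p' := by
      funext n
      rcases lt_or_ge n N0 with h | h
      · rw [hp'lt n h, prependL_lt' (show n < (pl ++ c').length by simp; omega)]
        rw [get_append_old n (show n < pl.length by omega)]
        exact hplget n (by omega)
      · rcases lt_or_ge n (N0 + c'.length) with hn2 | hn2
        · have hv1 : p' n = c'.get ⟨n - N0, by omega⟩ := by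
            have h2 := hp'mid (n - N0) (by omega)
            rwa [show N0 + (n - N0) = n by omega] at h2
          rw [hv1, prependL_lt' (show n < (pl ++ c').length by simp; omega)]
          rw [get_append_right_old pl c' (by omega)
            (h'' := by simp only [hpllen]; omega)]
          simp only [hpllen]
        · have hv1 : p' n = p (n - c'.length) := by
            have h2 := hp'tail (n - N0 - c'.length)
            rwa [show N0 + c'.length + (n - N0 - c'.length) = n by omega,
              show N0 + (n - N0 - c'.length) = n - c'.length by omega] at h2
          rw [hv1, prependL_ge' (by simp; omega)]
          show p (n - (pl ++ c').length + N0) = p (n - c'.length)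
          congr 1
          simp only [List.length_append, hpllen]
          omega
    have hxlchain : U.IsEdgePath (pl ++ c') := by
      show List.Chain' U.Adj (pl ++ c')
      rw [chain'_append_old]
      refine ⟨hplchain, hc'chain, ?_⟩
      intro x hx y hy
      rw [List.getLast?_eq_getLast hplne, Option.mem_some_iff] at hx
      rw [head?_get' hc'nil, Option.mem_some_iff] at hy
      subst hx
      subst hy
      show U.s (c'.get ⟨0, hLcpos⟩) ∈ U.r (pl.getLast hplne)
      rw [hc'head, getLast_eq_get_old, hplget (pl.length - 1) (by omega)]
      have h := hp (pl.length - 1)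
      rw [show pl.length - 1 + 1 = N0 by omega] at h
      rw [hvdef]
      exact h
    have hp' : U.IsIPath p' := by
      have hconn : ∀ h : (pl ++ c') ≠ [],
          U.s (shiftL N0 p 0) ∈ U.r ((pl ++ c').getLast h) := by
        intro h
        have hgl : (pl ++ c').getLast h = c'.getLast hc'nil := getLast_append'_old pl c' hc'nil
        rw [hgl]
        show U.s (p (0 + N0)) ∈ _
        rw [Nat.zero_add, ← hvdef]
        exact hc'last
      have h := isIPath_prependL' hxlchain (isIPath_shiftL' hp N0) hconn
      have h2 : (pl ++ c').length = N0 + c'.length := by simp [hpllen]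
      rw [show prependL (pl ++ c') (shiftL N0 p) = p' from hp'geq] at h
      exact h
    -- the shifted path q'
    set q' : ℕ → E := fun n =>
      if (n : ℤ) + k < (N0 : ℤ) then p n else p' ((n : ℤ) + k).toNat with hq'def
    have hq'S : ∀ S ∈ t, prependL (yd S).1 (shiftL (xd S).1.length p') = q' := by
      intro S hS
      obtain ⟨hprex, hprey, hperiod, hkk, -⟩ := hmain S hS
      have haN0 : (xd S).1.length < N0 := by have := hN0S S hS; omega
      have hbN0 : (yd S).1.length < N0 := by have := hN0S S hS; omega
      funext n
      by_cases hb : n < (yd S).1.length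
      · rw [prependL_lt' hb]
        have hq : q' n = p n := by
          simp only [hq'def]
          rw [if_pos (by omega)]
        rw [hq]
        exact (hprey n hb).symm
      · rw [prependL_ge' (by omega)]
        show p' (n - (yd S).1.length + (xd S).1.length) = q' n
        by_cases hcase : (n : ℤ) + k < (N0 : ℤ)
        · rw [hp'lt _ (by omega)]
          have hq : q' n = p n := by simp only [hq'def]; rw [if_pos hcase]
          rw [hq]
          have h2 := hperiod (n - (yd S).1.length)
          rwa [show n - (yd S).1.length + (yd S).1.length = n by omega] at h2
        · have hq : q' n = p' ((n : ℤ) + k).toNat := by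
            simp only [hq'def]; rw [if_neg hcase]
          rw [hq]
          congr 1
          omega
    have hq'p : U.IsIPath q' := by
      have hconn : ∀ h : (yd S0).1 ≠ [],
          U.s (shiftL (xd S0).1.length p' 0) ∈ U.r ((yd S0).1.getLast h) := by
        intro h
        have huy := (hspec S0 hS0).2.1
        have hxy := (hspec S0 hS0).2.2.1
        have hsub := huy.2.2 ((yd S0).1.getLast h) (List.getLast?_eq_getLast h)
        apply hsub
        rw [← hxy]
        show U.s (p' (0 + (xd S0).1.length)) ∈ (xd S0).2
        rw [Nat.zero_add, hp'lt _ (by have := hN0S S0 hS0; omega)]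
        exact (hmain S0 hS0).2.2.2.2
      have h := isIPath_prependL' ((hspec S0 hS0).2.1.1) (isIPath_shiftL' hp' _) hconn
      rwa [hq'S S0 hS0] at h
    have hp'preS : ∀ S ∈ t, prependL (xd S).1 (shiftL (xd S).1.length p') = p' := by
      intro S hS
      apply prependL_shiftL'
      intro n h
      rw [hp'lt n (by have := hN0S S hS; omega)]
      exact (hmain S hS).1 n h
    have hccS : ∀ S ∈ t, U.s (p' (xd S).1.length) ∈ (xd S).2 := by
      intro S hS
      rw [hp'lt _ (by have := hN0S S hS; omega)]
      exact (hmain S hS).2.2.2.2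
    -- membership of the perturbed element in every basic set
    have hmemASet : ∀ S ∈ t,
        (((Sum.inr p' : XType V E), k, (Sum.inr q' : XType V E)) : Trip V E) ∈
          U.ASetRaw (xd S) (yd S) := by
      intro S hS
      refine ⟨Sum.inr (shiftL (xd S).1.length p'), isIPath_shiftL' hp' _, ?_, ?_, ?_, ?_, ?_⟩
      · show U.s (p' (0 + (xd S).1.length)) ∈ (xd S).2
        rw [Nat.zero_add]
        exact hccS S hS
      · show U.s (p' (0 + (xd S).1.length)) ∈ (yd S).2
        rw [Nat.zero_add, ← (hspec S hS).2.2.1]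
        exact hccS S hS
      · show U.IsXEl (Sum.inr (prependL (xd S).1 (shiftL (xd S).1.length p')))
        rw [hp'preS S hS]
        exact hp'
      · show U.IsXEl (Sum.inr (prependL (yd S).1 (shiftL (xd S).1.length p')))
        rw [hq'S S hS]
        exact hq'p
      · show _ = ((Sum.inr (prependL (xd S).1 (shiftL (xd S).1.length p')) : XType V E),
          ((xd S).1.length : ℤ) - ((yd S).1.length : ℤ),
          (Sum.inr (prependL (yd S).1 (shiftL (xd S).1.length p')) : XType V E))
        rw [hp'preS S hS, hq'S S hS, (hmain S hS).2.2.2.1]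
    have hInG : U.InGrpd (((Sum.inr p' : XType V E), k, (Sum.inr q' : XType V E)) : Trip V E) := by
      obtain ⟨μg, hμ1, hμ2, hμ3, hμ4, hμ5, hμ6⟩ := hmemASet S0 hS0
      exact ⟨xd S0, yd S0, μg, (hspec S0 hS0).1, (hspec S0 hS0).2.1, hμ1,
        (hspec S0 hS0).2.2.1, hμ2, hμ3, hμ4, hμ5, hμ6⟩
    have hG'S : ∀ S ∈ t,
        (⟨((Sum.inr p' : XType V E), k, (Sum.inr q' : XType V E)), hInG⟩ : U.Grpd) ∈ S := by
      intro S hS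
      rw [(hspec S hS).2.2.2.2.2.2.2]
      refine ⟨hmemASet S hS, ?_⟩
      intro hcon
      have haN0 : (xd S).1.length < N0 := by have := hN0S S hS; omega
      rcases hcon with hcon | hcon
      · -- an extra edge e ∈ K
        replace hcon := Set.mem_iUnion₂.mp hcon
        obtain ⟨e, heK, hmem⟩ := hcon
        rw [concatU_edge', concatU_edge'] at hmem
        obtain ⟨μ'', hXe, hcxe, hcye, hXxe, hXye, heqe⟩ := hmem
        have h11 : concatXel ((xd S).1 ++ [e], U.r e) μ'' = Sum.inr p' :=
          (congrArg (fun z => z.1) heqe).symm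
        rcases μ'' with w | ρ
        · exact absurd h11 (by simp [Ultragraph.concatXel])
        have hxρ : prependL ((xd S).1 ++ [e]) ρ = p' := Sum.inr.inj h11
        have hpe : p (xd S).1.length = e := by
          have hlen : (xd S).1.length < ((xd S).1 ++ [e]).length := by simp
          have h2 : p' (xd S).1.length = ((xd S).1 ++ [e]).get ⟨(xd S).1.length, hlen⟩ := by
            rw [← hxρ, prependL_lt' hlen]
          rw [← hp'lt _ (by omega), h2]
          simp
        have hprex' : prependL ((xd S).1 ++ [e]) (shiftL ((xd S).1.length + 1) p) = p := by
          have hlen2 : ((xd S).1 ++ [e]).length = (xd S).1.length + 1 := by simp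
          rw [show (xd S).1.length + 1 = ((xd S).1 ++ [e]).length from hlen2.symm]
          apply prependL_shiftL'
          intro n h
          rcases lt_or_ge n (xd S).1.length with h2 | h2
          · rw [get_append_old n h2]
            exact (hmain S hS).1 n h2
          · have h3 : n = (xd S).1.length := by
              rw [hlen2] at h
              omega
            subst h3
            have h4 : ((xd S).1 ++ [e]).get ⟨(xd S).1.length, h⟩ = e := by simp
            rw [h4]
            exact hpe
        have hprey' : prependL ((yd S).1 ++ [e]) (shiftL ((xd S).1.length + 1) p) = p := by
          funext n
          rcases lt_or_ge n (yd S).1.length with h2 | h2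
          · rw [prependL_lt' (show n < ((yd S).1 ++ [e]).length by simp; omega)]
            rw [get_append_old n h2]
            exact ((hmain S hS).2.1 n h2).symm
          · rcases eq_or_lt_of_le h2 with h3 | h3
            · rw [prependL_lt' (show n < ((yd S).1 ++ [e]).length by simp; omega)]
              rw [get_append_right_old (yd S).1 [e] (by omega)
                (h'' := by simp; omega)]
              have h4 : [e].get ⟨n - (yd S).1.length, by simp; omega⟩ = e :=
                get_singleton_old e _
              rw [h4]
              have h5 := (hmain S hS).2.2.1 0
              rw [Nat.zero_add, Nat.zero_add] at h5
              rw [← h3, ← h5]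
              exact hpe.symm
            · rw [prependL_ge' (by simp; omega)]
              show p (n - ((yd S).1 ++ [e]).length + ((xd S).1.length + 1)) = p n
              have h5 := (hmain S hS).2.2.1 (n - (yd S).1.length)
              rw [show n - (yd S).1.length + (yd S).1.length = n by omega] at h5
              rw [show n - ((yd S).1 ++ [e]).length + ((xd S).1.length + 1)
                  = n - (yd S).1.length + (xd S).1.length by simp; omega]
              exact h5
        have hcce : U.s (p (0 + ((xd S).1.length + 1))) ∈ U.r e := by
          rw [Nat.zero_add, ← hpe]
          exact hp (xd S).1.length
        apply hNotSub S hS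
        left
        simp only [Set.mem_iUnion, exists_prop]
        refine ⟨e, heK, ?_⟩
        show g0.val.1 ∈ U.ASetRaw (concatU (xd S) ([e], U.r e)) (concatU (yd S) ([e], U.r e))
        rw [concatU_edge', concatU_edge']
        refine ⟨Sum.inr (shiftL ((xd S).1.length + 1) p), isIPath_shiftL' hp _,
          hcce, hcce, ?_, ?_, ?_⟩
        · show U.IsXEl (Sum.inr (prependL ((xd S).1 ++ [e]) (shiftL ((xd S).1.length + 1) p)))
          rw [hprex']
          exact hp
        · show U.IsXEl (Sum.inr (prependL ((yd S).1 ++ [e]) (shiftL ((xd S).1.length + 1) p)))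
          rw [hprey']
          exact hp
        · refine Prod.ext ?_ (Prod.ext ?_ ?_)
          · rw [hg11]
            show (Sum.inr p : XType V E) =
              Sum.inr (prependL ((xd S).1 ++ [e]) (shiftL ((xd S).1.length + 1) p))
            rw [hprex']
          · show k = (((xd S).1 ++ [e]).length : ℤ) - (((yd S).1 ++ [e]).length : ℤ)
            have h6 := (hmain S hS).2.2.2.1
            simp only [List.length_append, List.length_cons, List.length_nil]
            push_cast
            omega
          · rw [hg22]
            show (Sum.inr p : XType V E) =
              Sum.inr (prependL ((yd S).1 ++ [e]) (shiftL ((xd S).1.length + 1) p))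
            rw [hprey']
      · -- an extra set C ∈ Q
        replace hcon := Set.mem_iUnion₂.mp hcon
        obtain ⟨C, hCQ, hmem⟩ := hcon
        rw [concatU_nilC', concatU_nilC'] at hmem
        obtain ⟨μ'', hXe, hcxe, hcye, hXxe, hXye, heqe⟩ := hmem
        have h11 : concatXel ((xd S).1, (xd S).2 ∩ C) μ'' = Sum.inr p' :=
          (congrArg (fun z => z.1) heqe).symm
        rcases μ'' with w | ρ
        · exact absurd h11 (by simp [Ultragraph.concatXel])
        have hxρ : prependL (xd S).1 ρ = p' := Sum.inr.inj h11
        have hρ : ρ = shiftL (xd S).1.length p' := by rw [← hxρ, shiftL_prependL']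
        have hsC : U.s (p (xd S).1.length) ∈ (xd S).2 ∩ C := by
          have hc : U.s (ρ 0) ∈ (xd S).2 ∩ C := hcxe
          rw [hρ] at hc
          have hc2 : U.s (p' (0 + (xd S).1.length)) ∈ (xd S).2 ∩ C := hc
          rwa [Nat.zero_add, hp'lt _ (by omega)] at hc2
        have hprex' : prependL (xd S).1 (shiftL (xd S).1.length p) = p :=
          prependL_shiftL' (hmain S hS).1
        have hprey' : prependL (yd S).1 (shiftL (xd S).1.length p) = p := by
          funext n
          rcases lt_or_ge n (yd S).1.length with h2 | h2
          · rw [prependL_lt' h2]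
            exact ((hmain S hS).2.1 n h2).symm
          · rw [prependL_ge' h2]
            show p (n - (yd S).1.length + (xd S).1.length) = p n
            have h5 := (hmain S hS).2.2.1 (n - (yd S).1.length)
            rwa [show n - (yd S).1.length + (yd S).1.length = n by omega] at h5
        apply hNotSub S hS
        right
        simp only [Set.mem_iUnion, exists_prop]
        refine ⟨C, hCQ, ?_⟩
        show g0.val.1 ∈ U.ASetRaw (concatU (xd S) (([] : List E), C))
          (concatU (yd S) (([] : List E), C))
        rw [concatU_nilC', concatU_nilC']
        refine ⟨Sum.inr (shiftL (xd S).1.length p), isIPath_shiftL' hp _, ?_, ?_, ?_, ?_, ?_⟩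
        · show U.s (p (0 + (xd S).1.length)) ∈ (xd S).2 ∩ C
          rw [Nat.zero_add]
          exact hsC
        · show U.s (p (0 + (xd S).1.length)) ∈ (yd S).2 ∩ C
          rw [Nat.zero_add, ← (hspec S hS).2.2.1]
          exact hsC
        · show U.IsXEl (Sum.inr (prependL (xd S).1 (shiftL (xd S).1.length p)))
          rw [hprex']
          exact hp
        · show U.IsXEl (Sum.inr (prependL (yd S).1 (shiftL (xd S).1.length p)))
          rw [hprey']
          exact hp
        · refine Prod.ext ?_ (Prod.ext ?_ ?_)
          · rw [hg11]
            show (Sum.inr p : XType V E) =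
              Sum.inr (prependL (xd S).1 (shiftL (xd S).1.length p))
            rw [hprex']
          · show k = ((xd S).1.length : ℤ) - ((yd S).1.length : ℤ)
            have h6 := (hmain S hS).2.2.2.1
            omega
          · rw [hg22]
            show (Sum.inr p : XType V E) =
              Sum.inr (prependL (yd S).1 (shiftL (xd S).1.length p))
            rw [hprey']
    -- invariance: the units of p, p', q' lie in D
    have hstep : ∀ (a b : XType V E) (j : ℤ), U.InGrpd ((a, j, b) : Trip V E) →
        ∀ (ha : U.InGrpd ((b, 0, b) : Trip V E)) (hb : U.InGrpd ((a, 0, a) : Trip V E)),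
        (⟨((b, 0, b) : Trip V E), ha⟩ : U.Grpd) ∈ D →
        (⟨((a, 0, a) : Trip V E), hb⟩ : U.Grpd) ∈ D := by
      intro a b j hab ha hb h
      exact hDinv ⟨(a, j, b), hab⟩ ha hb h
    have hpD : (⟨((Sum.inr p : XType V E), 0, (Sum.inr p : XType V E)), unit_mem' hp⟩ :
        U.Grpd) ∈ D := by
      obtain ⟨hh, hmem⟩ := g0.2.1
      have hseq : srcT g0.val.1 = ((Sum.inr p : XType V E), 0, (Sum.inr p : XType V E)) := by
        show (g0.val.1.2.2, (0 : ℤ), g0.val.1.2.2) = _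
        rw [hg22]
      have heq2 : (⟨srcT g0.val.1, hh⟩ : U.Grpd) =
          ⟨((Sum.inr p : XType V E), 0, (Sum.inr p : XType V E)), unit_mem' hp⟩ :=
        Subtype.ext hseq
      rw [← heq2]
      exact hmem
    have hγ1 : U.InGrpd (((Sum.inr p' : XType V E),
        ((pl ++ c').length : ℤ) - (pl.length : ℤ), (Sum.inr p : XType V E)) : Trip V E) := by
      have hUPx1 : U.IsUPath (pl ++ c', ({v} : Set V)) := by
        refine ⟨hxlchain, IsG0.vertex v, ?_⟩
        intro e he
        rw [List.getLast?_append_of_ne_nil pl hc'nil, List.getLast?_eq_getLast hc'nil] at he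
        rw [← Option.some.inj he]
        exact Set.singleton_subset_iff.mpr hc'last
      have hUPy1 : U.IsUPath (pl, ({v} : Set V)) := by
        refine ⟨hplchain, IsG0.vertex v, ?_⟩
        intro e he
        rw [List.getLast?_eq_getLast hplne] at he
        rw [← Option.some.inj he]
        apply Set.singleton_subset_iff.mpr
        rw [getLast_eq_get_old, hplget (pl.length - 1) (by omega), hvdef]
        have h := hp (pl.length - 1)
        rwa [show pl.length - 1 + 1 = N0 by omega] at h
      have hplp : prependL pl (shiftL N0 p) = p := by
        rw [show N0 = pl.length from hpllen.symm]
        exact prependL_shiftL' (fun n h => (hplget n h).symm)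
      refine ⟨(pl ++ c', ({v} : Set V)), (pl, ({v} : Set V)), Sum.inr (shiftL N0 p),
        hUPx1, hUPy1, isIPath_shiftL' hp N0, rfl, ?_, ?_, ?_, ?_, ?_⟩
      · show U.s (p (0 + N0)) ∈ ({v} : Set V)
        rw [Nat.zero_add, hvdef]
        exact rfl
      · show U.s (p (0 + N0)) ∈ ({v} : Set V)
        rw [Nat.zero_add, hvdef]
        exact rfl
      · show U.IsXEl (Sum.inr (prependL (pl ++ c') (shiftL N0 p)))
        rw [hp'geq]
        exact hp'
      · show U.IsXEl (Sum.inr (prependL pl (shiftL N0 p)))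
        rw [hplp]
        exact hp
      · show _ = ((Sum.inr (prependL (pl ++ c') (shiftL N0 p)) : XType V E),
          ((pl ++ c').length : ℤ) - (pl.length : ℤ),
          (Sum.inr (prependL pl (shiftL N0 p)) : XType V E))
        rw [hp'geq, hplp]
    have hp'D : (⟨((Sum.inr p' : XType V E), 0, (Sum.inr p' : XType V E)), unit_mem' hp'⟩ :
        U.Grpd) ∈ D :=
      hstep _ _ _ hγ1 (unit_mem' hp) (unit_mem' hp') hpD
    have hγ2 : U.InGrpd (((Sum.inr q' : XType V E),
        ((yd S0).1.length : ℤ) - ((xd S0).1.length : ℤ), (Sum.inr p' : XType V E)) :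
        Trip V E) := by
      refine ⟨yd S0, xd S0, Sum.inr (shiftL (xd S0).1.length p'),
        (hspec S0 hS0).2.1, (hspec S0 hS0).1, isIPath_shiftL' hp' _,
        ((hspec S0 hS0).2.2.1).symm, ?_, ?_, ?_, ?_, ?_⟩
      · show U.s (p' (0 + (xd S0).1.length)) ∈ (yd S0).2
        rw [Nat.zero_add, ← (hspec S0 hS0).2.2.1]
        exact hccS S0 hS0
      · show U.s (p' (0 + (xd S0).1.length)) ∈ (xd S0).2
        rw [Nat.zero_add]
        exact hccS S0 hS0
      · show U.IsXEl (Sum.inr (prependL (yd S0).1 (shiftL (xd S0).1.length p')))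
        rw [hq'S S0 hS0]
        exact hq'p
      · show U.IsXEl (Sum.inr (prependL (xd S0).1 (shiftL (xd S0).1.length p')))
        rw [hp'preS S0 hS0]
        exact hp'
      · show _ = ((Sum.inr (prependL (yd S0).1 (shiftL (xd S0).1.length p')) : XType V E),
          ((yd S0).1.length : ℤ) - ((xd S0).1.length : ℤ),
          (Sum.inr (prependL (xd S0).1 (shiftL (xd S0).1.length p')) : XType V E))
        rw [hq'S S0 hS0, hp'preS S0 hS0]
    have hq'D : (⟨((Sum.inr q' : XType V E), 0, (Sum.inr q' : XType V E)), unit_mem' hq'p⟩ :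
        U.Grpd) ∈ D :=
      hstep _ _ _ hγ2 (unit_mem' hp') (unit_mem' hq'p) hp'D
    have hG'restr : (⟨((Sum.inr p' : XType V E), k, (Sum.inr q' : XType V E)), hInG⟩ :
        U.Grpd) ∈ U.RestrSet D :=
      ⟨⟨unit_mem' hq'p, hq'D⟩, ⟨unit_mem' hp', hp'D⟩⟩
    have hG'W : (⟨((Sum.inr p' : XType V E), k, (Sum.inr q' : XType V E)), hInG⟩ :
        U.Grpd) ∈ W :=
      hBW (Set.mem_sInter.mpr (fun S hS => hG'S S hS))
    have hbad' := hWbad _ hG'restr hG'W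
    have hpq : p' = q' := Sum.inr.inj hbad'.1
    -- final contradiction: p' = q' forces c' = c
    have hshift' : ∀ m : ℕ, p' (m + (xd S0).1.length) = p' (m + (yd S0).1.length) := by
      intro m
      have h1 : prependL (yd S0).1 (shiftL (xd S0).1.length p') = p' := by
        rw [hq'S S0 hS0, ← hpq]
      have h2 := prependL_ge' (l := (yd S0).1) (f := shiftL (xd S0).1.length p')
        (n := m + (yd S0).1.length) (by omega)
      rw [h1, Nat.add_sub_cancel] at h2
      exact h2.symm
    have hper' : ∀ n, M ≤ n → p' (n + d) = p' n := hperGen p' hshift'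
    have hall : ∀ n, p' n = p n := by
      intro n
      induction n using Nat.strong_induction_on with
      | _ n ih =>
        by_cases h : n < N0
        · exact hp'lt n h
        · have e1 : p' n = p' (n - d) := by
            have h2 := hper' (n - d) (by omega)
            rwa [show n - d + d = n by omega] at h2
          have e2 : p (n - d) = p n := by
            have h2 := hper (n - d) (by omega)
            rw [show n - d + d = n by omega] at h2
            exact h2.symm
          rw [e1, ih (n - d) (by omega), e2]
    have hc'getp : ∀ (j : ℕ) (h : j < c'.length), c'.get ⟨j, h⟩ = p (N0 + j) := by
      intro j h
      rw [← hp'mid j h, hall]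
    have hLcv : U.s (p (N0 + c'.length)) = v := by
      have h2 := hp'tail 0
      rw [hall, Nat.add_zero, Nat.add_zero] at h2
      rw [h2]
    have hN1eq : N1 = N0 + c'.length := by
      have hub : N1 ≤ N0 + c'.length := by
        have h2 : j0 ≤ c'.length - 1 := Nat.find_le (by
          rw [show N0 + 1 + (c'.length - 1) = N0 + c'.length by omega]
          exact hLcv)
        omega
      rcases lt_or_eq_of_le hub with hlt | heq2
      · exfalso
        have hi : N1 - N0 < c'.length := by omega
        have h3 := hc'getp (N1 - N0) hi
        rw [show N0 + (N1 - N0) = N1 by omega] at h3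
        exact hc'int (N1 - N0) hi (by omega) (by rw [h3]; exact hN1v)
      · exact heq2
    have hceq : c' = c := by
      apply List.ext_get
      · rw [hclen]
        omega
      · intro n h1 h2
        rw [hc'getp n h1, hcget n h2]
    exact hc'ne hceq
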